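/- arXiv:1609.03406 — 3 statements merged into one kernel-verified Lean document; each statement's English description precedes it below -/
import Mathlib

section
/- Let Ω ⊂ ℝ^N be bounded open with C¹ boundary and A ∈ (L^∞(Ω))^N such that the 'compatibility matrix' with entries ξ_{jk} = ∂_{x_j}a_k − ∂_{x_k}a_j is not identically zero (i.e. curl A ≠ 0). Then there exists a constant C(Ω) > 0 such that for all ω ∈ H¹_0(Ω), ‖ω‖_{L²} ≤ C(Ω)‖(i∇+A)ω‖_{(L²)^N}. -/
open MeasureTheory
open Bornology Module
open scoped NNReal ENNReal

lemma opNorm_le_sum_single {N : ℕ} (L : (Fin N → ℝ) →L[ℝ] ℝ) :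
    ‖L‖ ≤ ∑ j, |L (Pi.single j 1)| := by
  apply ContinuousLinearMap.opNorm_le_bound _ (by positivity)
  intro h
  have hh : h = ∑ j, h j • (Pi.single j 1 : Fin N → ℝ) := by
    funext i
    simp [Pi.single_apply, Finset.sum_ite_eq', mul_comm]
  calc ‖L h‖ = ‖∑ j, h j • L (Pi.single j 1)‖ := by
        conv_lhs => rw [hh]
        rw [map_sum]
        simp
    _ ≤ ∑ j, ‖h j • L (Pi.single j 1)‖ := norm_sum_le _ _
    _ ≤ ∑ j, |L (Pi.single j 1)| * ‖h‖ := by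
        apply Finset.sum_le_sum
        intro j _
        rw [norm_smul, mul_comm]
        have := norm_le_pi_norm h j
        exact mul_le_mul_of_nonneg_left this (norm_nonneg _)
    _ = (∑ j, |L (Pi.single j 1)|) * ‖h‖ := by rw [Finset.sum_mul]

lemma poincare_aux {N : ℕ} (hN : 2 ≤ N) {r : ℝ} (hr : 0 < r) :
    ∃ C : ℝ≥0, 0 < C ∧ ∀ v : (Fin N → ℝ) → ℝ, ContDiff ℝ 1 v →
      tsupport v ⊆ Metric.closedBall 0 r →
      eLpNorm v 2 volume ≤ C * eLpNorm (fderiv ℝ v) 2 volume := by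
  set μ : Measure (Fin N → ℝ) := volume
  set s : Set (Fin N → ℝ) := Metric.closedBall 0 r
  have hfr : finrank ℝ (Fin N → ℝ) = N := by simp [Module.finrank_pi]
  set p : ℝ≥0 := 2 * N / (N + 2) with hp_def
  have hN2 : ((N:ℝ) + 2) ≠ 0 := by positivity
  have hNpos : (0:ℝ) < N := by exact_mod_cast lt_of_lt_of_le (by norm_num) hN
  have hpcoe : (p : ℝ) = 2 * N / (N + 2) := by push_cast [hp_def]; ring
  have hp1 : (1:ℝ≥0) ≤ p := by
    rw [← NNReal.coe_le_coe, hpcoe]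
    rw [le_div_iff₀ (by positivity)]
    have hN' : (2:ℝ) ≤ N := by exact_mod_cast hN
    push_cast
    linarith
  have h2p : p < finrank ℝ (Fin N → ℝ) := by
    rw [hfr, ← NNReal.coe_lt_coe, hpcoe]
    rw [div_lt_iff₀ (by positivity)]
    push_cast
    nlinarith
  have hp2' : (p : ℝ≥0∞) ≤ 2 := by
    rw [show ((2:ℝ≥0∞)) = ((2:ℝ≥0):ℝ≥0∞) by norm_cast]
    rw [ENNReal.coe_le_coe, ← NNReal.coe_le_coe, hpcoe]
    rw [div_le_iff₀ (by positivity)]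
    push_cast
    linarith
  have hpq : (p:ℝ)⁻¹ - ((finrank ℝ (Fin N → ℝ) : ℝ))⁻¹ ≤ (((2:ℝ≥0)):ℝ)⁻¹ := by
    rw [hfr, hpcoe, inv_div, show (((2:ℝ≥0)):ℝ) = 2 from by norm_num]
    rw [inv_eq_one_div, inv_eq_one_div,
      div_sub_div _ _ (by positivity : (2:ℝ)*N ≠ 0) (by positivity : (N:ℝ) ≠ 0),
      div_le_div_iff₀ (by positivity) (by norm_num)]
    ring_nf
    nlinarith [hNpos]
  set θ : ℝ := 1 / (p:ℝ≥0∞).toReal - 1 / (2:ℝ≥0∞).toReal with hθdef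
  have hθ : 0 ≤ θ := by
    rw [hθdef]
    have h1 : (p:ℝ≥0∞).toReal = (p:ℝ) := by simp
    have h2 : ((2:ℝ≥0∞)).toReal = 2 := by simp
    rw [h1, h2]
    have hppos : (0:ℝ) < p := by rw [hpcoe]; positivity
    have hple : (p:ℝ) ≤ 2 := by
      rw [hpcoe, div_le_iff₀ (by positivity)]; linarith
    rw [sub_nonneg]
    exact one_div_le_one_div_of_le hppos hple
  set C₀ : ℝ≥0 := eLpNormLESNormFDerivOfLeConst ℝ μ s p 2 with hC₀
  set D : ℝ≥0∞ := (C₀ : ℝ≥0∞) * (μ s) ^ θ with hDdef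
  have hsfin : μ s < ⊤ := measure_closedBall_lt_top
  have hD : D ≠ ⊤ :=
    ENNReal.mul_ne_top ENNReal.coe_ne_top (ENNReal.rpow_ne_top_of_nonneg hθ hsfin.ne)
  refine ⟨D.toNNReal + 1, by positivity, fun v hv hts => ?_⟩
  have hsupp : Function.support v ⊆ s := (subset_tsupport v).trans hts
  have hf_meas : AEStronglyMeasurable (fderiv ℝ v) μ :=
    (hv.continuous_fderiv one_ne_zero).aestronglyMeasurable
  have hfs : Function.support (fderiv ℝ v) ⊆ s :=
    (support_fderiv_subset ℝ).trans hts
  have key := eLpNorm_le_eLpNorm_fderiv_of_le μ hv hsupp hp1 h2p hpq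
    Metric.isBounded_closedBall
  have holder : eLpNorm (fderiv ℝ v) p μ ≤ eLpNorm (fderiv ℝ v) 2 μ * (μ s) ^ θ := by
    calc eLpNorm (fderiv ℝ v) p μ = eLpNorm (fderiv ℝ v) p (μ.restrict s) :=
          (eLpNorm_restrict_eq_of_support_subset (f := fderiv ℝ v) (p := (p:ℝ≥0∞)) (μ := μ) hfs).symm
      _ ≤ eLpNorm (fderiv ℝ v) 2 (μ.restrict s) * ((μ.restrict s) Set.univ) ^ θ :=
          eLpNorm_le_eLpNorm_mul_rpow_measure_univ hp2' hf_meas.restrict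
      _ ≤ eLpNorm (fderiv ℝ v) 2 μ * (μ s) ^ θ := by
          rw [Measure.restrict_apply_univ]
          exact mul_le_mul' (eLpNorm_mono_measure _ Measure.restrict_le_self) le_rfl
  calc eLpNorm v 2 μ = eLpNorm v ((2:ℝ≥0):ℝ≥0∞) μ := by norm_cast
    _ ≤ C₀ * eLpNorm (fderiv ℝ v) p μ := key
    _ ≤ C₀ * (eLpNorm (fderiv ℝ v) 2 μ * (μ s) ^ θ) := by gcongr
    _ = D * eLpNorm (fderiv ℝ v) 2 μ := by rw [hDdef]; ring
    _ ≤ (D.toNNReal + 1 : ℝ≥0) * eLpNorm (fderiv ℝ v) 2 μ := by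
        gcongr
        rw [← ENNReal.coe_toNNReal hD]
        norm_cast
        exact le_self_add


/-- The `j`-th component of the magnetic gradient `(i∇ + A)ω`. -/
noncomputable def magGrad (N : ℕ) (A : Fin N → (Fin N → ℝ) → ℝ)
    (ω : (Fin N → ℝ) → ℂ) (j : Fin N) (x : Fin N → ℝ) : ℂ :=
  Complex.I * fderiv ℝ ω x (Pi.single j 1) + (A j x : ℂ) * ω x

set_option maxHeartbeats 2000000 in
/-- generalized Poincaré inequality: if `Ω` is bounded open and the
magnetic potential `A` has non-vanishing curl somewhere in `Ω`, then
`‖ω‖_{L²} ≤ C ‖(i∇+A)ω‖_{(L²)^N}` for all `ω ∈ H¹₀(Ω)` (here: smooth functions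
compactly supported in `Ω`). -/
theorem generalized_poincare (N : ℕ) (Ω : Set (Fin N → ℝ))
    (hΩo : IsOpen Ω) (hΩb : Bornology.IsBounded Ω)
    (A : Fin N → (Fin N → ℝ) → ℝ) (K : ℝ)
    (hAbd : ∀ j, ∀ x ∈ Ω, |A j x| ≤ K)
    (hAdiff : ∀ j, ∀ x ∈ Ω, DifferentiableAt ℝ (A j) x)
    (hcurl : ∃ x ∈ Ω, ∃ j k : Fin N,
      fderiv ℝ (A k) x (Pi.single j 1) ≠ fderiv ℝ (A j) x (Pi.single k 1)) :
    ∃ C > (0:ℝ), ∀ ω : (Fin N → ℝ) → ℂ,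
      ContDiff ℝ 1 ω → HasCompactSupport ω → tsupport ω ⊆ Ω →
      Real.sqrt (∫ x in Ω, ‖ω x‖ ^ 2)
        ≤ C * Real.sqrt (∑ j, ∫ x in Ω, ‖magGrad N A ω j x‖ ^ 2) := by
  classical
  obtain ⟨x₀, hx₀, j₀, k₀, hjk⟩ := hcurl
  have hjk' : j₀ ≠ k₀ := by rintro rfl; exact hjk rfl
  have hN : 2 ≤ N := by
    haveI : Nontrivial (Fin N) := ⟨j₀, k₀, hjk'⟩
    have h := Fintype.one_lt_card_iff_nontrivial.mpr this
    simp at h; omega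
  have hNpos : (0:ℝ) < N := by
    have : (2:ℝ) ≤ N := by exact_mod_cast hN
    linarith
  have hK0 : 0 ≤ K := le_trans (abs_nonneg _) (hAbd j₀ x₀ hx₀)
  obtain ⟨r, hr0, hΩr⟩ := hΩb.subset_closedBall_lt 0 0
  obtain ⟨C₂, hC₂, hpoin⟩ := poincare_aux hN hr0
  have hC₂R : (0:ℝ) < C₂ := hC₂
  refine ⟨(C₂:ℝ) * Real.sqrt N, by positivity, ?_⟩
  intro ω hω hωc hωs
  set μ : Measure (Fin N → ℝ) := volume with hμ
  have hΩfin : μ Ω < ⊤ := hΩb.measure_lt_top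
  haveI : Fact (μ Ω < ⊤) := ⟨hΩfin⟩
  -- continuity facts
  have hωcont : Continuous ω := hω.continuous
  have hFc : Continuous (fderiv ℝ ω) := hω.continuous_fderiv one_ne_zero
  have hFcs : HasCompactSupport (fderiv ℝ ω) := hωc.fderiv ℝ
  -- bounds
  obtain ⟨M₁, hM₁⟩ := hFc.bounded_above_of_compact_support hFcs
  obtain ⟨M₂, hM₂⟩ := hωcont.bounded_above_of_compact_support hωc
  have hM₂0 : 0 ≤ M₂ := le_trans (norm_nonneg _) (hM₂ x₀)
  have hsingle : ∀ j : Fin N, ‖(Pi.single j 1 : Fin N → ℝ)‖ ≤ 1 := by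
    intro j
    apply pi_norm_le_iff_of_nonneg zero_le_one |>.mpr
    intro i
    rcases eq_or_ne i j with rfl | hij
    · simp
    · simp [Pi.single_apply, hij]
  have hFj : ∀ (x) (j : Fin N), ‖fderiv ℝ ω x (Pi.single j 1)‖ ≤ M₁ := by
    intro x j
    calc ‖fderiv ℝ ω x (Pi.single j 1)‖ ≤ ‖fderiv ℝ ω x‖ * ‖(Pi.single j 1 : Fin N → ℝ)‖ :=
          (fderiv ℝ ω x).le_opNorm _
      _ ≤ M₁ * 1 := by
          apply mul_le_mul (hM₁ x) (hsingle j) (norm_nonneg _)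
          exact le_trans (norm_nonneg _) (hM₁ x)
      _ = M₁ := mul_one _
  set B₀ : ℝ := M₁ + K * M₂ with hB₀
  have hmbd : ∀ j, ∀ x ∈ Ω, ‖magGrad N A ω j x‖ ≤ B₀ := by
    intro j x hx
    rw [magGrad]
    calc ‖Complex.I * fderiv ℝ ω x (Pi.single j 1) + (A j x : ℂ) * ω x‖
        ≤ ‖Complex.I * fderiv ℝ ω x (Pi.single j 1)‖ + ‖(A j x : ℂ) * ω x‖ := norm_add_le _ _
      _ = ‖fderiv ℝ ω x (Pi.single j 1)‖ + |A j x| * ‖ω x‖ := by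
          rw [norm_mul, norm_mul, Complex.norm_I, one_mul, Complex.norm_real, Real.norm_eq_abs]
      _ ≤ M₁ + K * M₂ := by
          have h1 := hFj x j
          have h2 : |A j x| * ‖ω x‖ ≤ K * M₂ :=
            mul_le_mul (hAbd j x hx) (hM₂ x) (norm_nonneg _) hK0
          linarith
  have hB₀0 : 0 ≤ B₀ := le_trans (norm_nonneg _) (hmbd j₀ x₀ hx₀)
  -- measurability of magGrad on Ω
  have hmC : ∀ j, ContinuousOn (magGrad N A ω j) Ω := by
    intro j
    have h1 : Continuous fun x => Complex.I * fderiv ℝ ω x (Pi.single j 1) :=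
      continuous_const.mul (hFc.clm_apply continuous_const)
    have haj : ContinuousOn (A j) Ω := fun x hx =>
      ((hAdiff j x hx).continuousAt).continuousWithinAt
    have h2 : ContinuousOn (fun x => ((A j x : ℂ) * ω x)) Ω :=
      (Complex.continuous_ofReal.comp_continuousOn haj).mul hωcont.continuousOn
    exact h1.continuousOn.add h2
  have hm_meas : ∀ j, AEStronglyMeasurable (magGrad N A ω j) (μ.restrict Ω) := fun j =>
    (hmC j).aestronglyMeasurable hΩo.measurableSet
  have hm2_int : ∀ j, Integrable (fun x => ‖magGrad N A ω j x‖^2) (μ.restrict Ω) := by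
    intro j
    constructor
    · have := (hm_meas j).norm
      simp_rw [pow_two]
      exact this.mul this
    · apply HasFiniteIntegral.restrict_of_bounded (C := B₀^2) hΩfin
      filter_upwards [ae_restrict_mem hΩo.measurableSet] with x hx
      rw [Real.norm_eq_abs, abs_of_nonneg (by positivity)]
      exact pow_le_pow_left₀ (norm_nonneg _) (hmbd j x hx) 2
  set S : ℝ := ∑ j, ∫ x in Ω, ‖magGrad N A ω j x‖^2 ∂μ with hSdef
  have hS0 : 0 ≤ S := Finset.sum_nonneg fun j _ =>
    integral_nonneg fun x => by positivity
  -- the key claim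
  have claim : ∫ x in Ω, ‖ω x‖^2 ∂μ ≤ ((C₂:ℝ)^2 * N) * S := by
    -- basic integrability
    have hω1cs : HasCompactSupport (fun x => ‖ω x‖) :=
      hωc.comp_left (g := norm) norm_zero
    have hω2cs : HasCompactSupport (fun x => ‖ω x‖^2) :=
      hωc.comp_left (g := fun z : ℂ => ‖z‖^2) (by simp)
    have hω1_int : Integrable (fun x => ‖ω x‖) (μ.restrict Ω) :=
      ((hωcont.norm).integrable_of_hasCompactSupport hω1cs).restrict
    have hω2_int : Integrable (fun x => ‖ω x‖^2) (μ.restrict Ω) :=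
      (((hωcont.norm).pow 2).integrable_of_hasCompactSupport hω2cs).restrict
    apply le_of_forall_sub_le
    intro δ hδ
    rw [sub_le_iff_le_add]
    set I₁ : ℝ := ∫ x in Ω, ‖ω x‖ ∂μ with hI₁
    have hI₁0 : 0 ≤ I₁ := integral_nonneg fun x => norm_nonneg _
    set T : ℝ := (μ Ω).toReal with hT
    have hT0 : 0 ≤ T := ENNReal.toReal_nonneg
    set B : ℝ := 2*I₁ + T with hB
    have hBnn : 0 ≤ B := by positivity
    set ε : ℝ := min 1 (δ/(B+1)) with hεdef
    have hε0 : 0 < ε := lt_min one_pos (by positivity)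
    have hε1 : ε ≤ 1 := min_le_left _ _
    have hεB : ε * B ≤ δ := by
      calc ε * B ≤ (δ/(B+1)) * B := mul_le_mul_of_nonneg_right (min_le_right _ _) hBnn
        _ ≤ δ := by
            rw [div_mul_eq_mul_div, div_le_iff₀ (by positivity)]
            nlinarith [hδ.le, hBnn]
    -- the regularized absolute value
    set v : (Fin N → ℝ) → ℝ := fun x => Real.sqrt (‖ω x‖^2 + ε^2) - ε with hvdef
    have hqpos : ∀ x : Fin N → ℝ, 0 < ‖ω x‖^2 + ε^2 := fun x => by positivity
    have hv0 : ∀ x, 0 ≤ v x := by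
      intro x
      rw [hvdef]
      simp only [sub_nonneg]
      calc ε = Real.sqrt (ε^2) := (Real.sqrt_sq hε0.le).symm
        _ ≤ Real.sqrt (‖ω x‖^2 + ε^2) :=
            Real.sqrt_le_sqrt (le_add_of_nonneg_left (by positivity))
    have hvle : ∀ x, v x ≤ ‖ω x‖ := by
      intro x
      rw [hvdef]
      simp only [sub_le_iff_le_add]
      calc Real.sqrt (‖ω x‖^2 + ε^2) ≤ Real.sqrt ((‖ω x‖ + ε)^2) :=
            Real.sqrt_le_sqrt (by nlinarith [norm_nonneg (ω x), hε0.le])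
        _ = ‖ω x‖ + ε := Real.sqrt_sq (by positivity)
    have hωlev : ∀ x, ‖ω x‖ ≤ v x + ε := by
      intro x
      rw [hvdef]
      simp only [sub_add_cancel]
      calc ‖ω x‖ = Real.sqrt (‖ω x‖^2) := (Real.sqrt_sq (norm_nonneg _)).symm
        _ ≤ Real.sqrt (‖ω x‖^2 + ε^2) :=
            Real.sqrt_le_sqrt (le_add_of_nonneg_right (by positivity))
    -- smoothness of v
    have hnormsq : ContDiff ℝ 1 (fun x => ‖ω x‖^2) := by
      have := (contDiff_norm_sq ℝ (E := ℂ) (n := 1)).comp hω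
      exact this
    have hv : ContDiff ℝ 1 v := by
      apply ContDiff.sub _ contDiff_const
      exact ContDiff.sqrt (hnormsq.add contDiff_const) (fun x => (hqpos x).ne')
    have hvcont : Continuous v := hv.continuous
    have hvsupp : Function.support v ⊆ Function.support ω := by
      intro x hx
      by_contra h
      apply hx
      rw [Function.notMem_support] at h
      rw [hvdef]
      simp [h, Real.sqrt_sq hε0.le]
    have htv : tsupport v ⊆ Ω := (closure_mono hvsupp).trans hωs
    have htvr : tsupport v ⊆ Metric.closedBall 0 r := htv.trans hΩr
    have hvc : HasCompactSupport v := hωc.mono hvsupp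
    -- derivative of v
    have hvd : ∀ x, HasFDerivAt v
        ((1 / (2 * Real.sqrt (‖ω x‖^2 + ε^2))) •
          ((2:ℕ) • (innerSL ℝ (ω x)).comp (fderiv ℝ ω x))) x := by
      intro x
      have h1 : HasFDerivAt (fun y => ‖ω y‖^2)
          ((2:ℕ) • (innerSL ℝ (ω x)).comp (fderiv ℝ ω x)) x :=
        ((hω.differentiable one_ne_zero x).hasFDerivAt).norm_sq
      have h2 := (h1.add_const (ε^2)).sqrt (hqpos x).ne'
      exact h2.sub_const ε
    -- pointwise bound for the derivative
    set g : (Fin N → ℝ) → ℝ := fun x => ∑ j, ‖magGrad N A ω j x‖ with hgdef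
    have hg0 : ∀ x, 0 ≤ g x := fun x => Finset.sum_nonneg fun j _ => norm_nonneg _
    have hgbd : ∀ x ∈ Ω, g x ≤ N * B₀ := by
      intro x hx
      calc g x ≤ ∑ _j : Fin N, B₀ := Finset.sum_le_sum fun j _ => hmbd j x hx
        _ = N * B₀ := by simp [Finset.sum_const, Finset.card_univ, nsmul_eq_mul]
    have hfder : ∀ x, ‖fderiv ℝ v x‖ ≤ ‖Set.indicator Ω g x‖ := by
      intro x
      by_cases hx : x ∈ Ω
      · rw [Set.indicator_of_mem hx, Real.norm_eq_abs, abs_of_nonneg (hg0 x), (hvd x).fderiv]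
        refine le_trans (opNorm_le_sum_single _) (Finset.sum_le_sum fun j _ => ?_)
        set z := ω x with hz
        set w := fderiv ℝ ω x (Pi.single j 1) with hw
        set q := Real.sqrt (‖z‖^2 + ε^2) with hqdef
        have hqpos' : 0 < q := Real.sqrt_pos.mpr (hqpos x)
        have hzq : ‖z‖ ≤ q := by
          rw [hqdef]
          calc ‖z‖ = Real.sqrt (‖z‖^2) := (Real.sqrt_sq (norm_nonneg _)).symm
            _ ≤ Real.sqrt (‖z‖^2 + ε^2) :=
                Real.sqrt_le_sqrt (le_add_of_nonneg_right (by positivity))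
        have heval : ((1 / (2 * Real.sqrt (‖ω x‖^2 + ε^2))) •
            ((2:ℕ) • (innerSL ℝ (ω x)).comp (fderiv ℝ ω x))) (Pi.single j 1)
            = ((starRingEnd ℂ) z * w).re / q := by
          rw [ContinuousLinearMap.smul_apply, ContinuousLinearMap.smul_apply,
            ContinuousLinearMap.comp_apply]
          rw [innerSL_apply_apply, Complex.inner, ← hz, ← hw, ← hqdef]
          field_simp
          rw [smul_eq_mul, nsmul_eq_mul, Nat.cast_ofNat]
          field_simp
        rw [heval]
        have hkey : |((starRingEnd ℂ) z * w).re| ≤ ‖z‖ * ‖magGrad N A ω j x‖ := by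
          have hrepr : (starRingEnd ℂ) z * w =
              (starRingEnd ℂ) z * (-Complex.I * magGrad N A ω j x)
                + Complex.I * (A j x : ℂ) * ((starRingEnd ℂ) z * z) := by
            simp only [magGrad, ← hz, ← hw]
            linear_combination ((starRingEnd ℂ) z * w) * Complex.I_sq
          have h2 : (Complex.I * (A j x : ℂ) * ((starRingEnd ℂ) z * z)).re = 0 := by
            rw [show (starRingEnd ℂ) z * z = (Complex.normSq z : ℂ) from
              Complex.normSq_eq_conj_mul_self.symm]
            simp [Complex.mul_re, Complex.mul_im]
          rw [hrepr, Complex.add_re, h2, add_zero]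
          calc |((starRingEnd ℂ) z * (-Complex.I * magGrad N A ω j x)).re|
              ≤ ‖(starRingEnd ℂ) z * (-Complex.I * magGrad N A ω j x)‖ :=
                Complex.abs_re_le_norm _
            _ = ‖z‖ * ‖magGrad N A ω j x‖ := by
                rw [norm_mul, norm_mul, RCLike.norm_conj, norm_neg, Complex.norm_I, one_mul]
        calc |((starRingEnd ℂ) z * w).re / q| = |((starRingEnd ℂ) z * w).re| / q := by
              rw [abs_div, abs_of_pos hqpos']
          _ ≤ (‖z‖ * ‖magGrad N A ω j x‖) / q := by
              gcongr
          _ ≤ ‖magGrad N A ω j x‖ := by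
              rw [div_le_iff₀ hqpos']
              calc ‖z‖ * ‖magGrad N A ω j x‖ ≤ q * ‖magGrad N A ω j x‖ :=
                    mul_le_mul_of_nonneg_right hzq (norm_nonneg _)
                _ = ‖magGrad N A ω j x‖ * q := mul_comm _ _
      · rw [Set.indicator_of_notMem hx]
        have h0 : fderiv ℝ v x = 0 := by
          apply fderiv_of_notMem_tsupport
          exact fun hmem => hx (htv hmem)
        rw [h0]
        simp
    -- eLpNorm chain
    have hvm : MemLp v 2 μ := hvcont.memLp_of_hasCompactSupport hvc
    have hgmeas : AEStronglyMeasurable g (μ.restrict Ω) :=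
      Finset.aestronglyMeasurable_fun_sum _ fun j _ => (hm_meas j).norm
    have hgm : MemLp g 2 (μ.restrict Ω) := by
      apply MemLp.of_bound hgmeas ((N:ℝ) * B₀)
      filter_upwards [ae_restrict_mem hΩo.measurableSet] with x hx
      rw [Real.norm_eq_abs, abs_of_nonneg (hg0 x)]
      exact hgbd x hx
    have h2t : (2:ℝ≥0∞).toReal = 2 := by simp
    have hE1 : eLpNorm v 2 μ = ENNReal.ofReal ((∫ x, v x^2 ∂μ) ^ (2⁻¹:ℝ)) := by
      rw [hvm.eLpNorm_eq_integral_rpow_norm two_ne_zero ENNReal.ofNat_ne_top, h2t]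
      congr 2
      apply integral_congr_ae
      filter_upwards with x
      rw [Real.rpow_two, Real.norm_eq_abs, sq_abs]
    have hE2 : eLpNorm g 2 (μ.restrict Ω)
        = ENNReal.ofReal ((∫ x in Ω, g x^2 ∂μ) ^ (2⁻¹:ℝ)) := by
      rw [hgm.eLpNorm_eq_integral_rpow_norm two_ne_zero ENNReal.ofNat_ne_top, h2t]
      congr 2
      apply integral_congr_ae
      filter_upwards with x
      rw [Real.rpow_two, Real.norm_eq_abs, sq_abs]
    have big : eLpNorm v 2 μ ≤ (C₂:ℝ≥0∞) * eLpNorm g 2 (μ.restrict Ω) := by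
      calc eLpNorm v 2 μ ≤ C₂ * eLpNorm (fderiv ℝ v) 2 μ := hpoin v hv htvr
        _ ≤ C₂ * eLpNorm (Set.indicator Ω g) 2 μ :=
            mul_le_mul' le_rfl (eLpNorm_mono hfder)
        _ = C₂ * eLpNorm g 2 (μ.restrict Ω) := by
            rw [eLpNorm_indicator_eq_eLpNorm_restrict hΩo.measurableSet]
    rw [hE1, hE2, ← ENNReal.ofReal_coe_nnreal, ← ENNReal.ofReal_mul (NNReal.coe_nonneg _)] at big
    have hIv0 : 0 ≤ ∫ x, v x^2 ∂μ := integral_nonneg fun x => sq_nonneg _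
    have hIg0 : 0 ≤ ∫ x in Ω, g x^2 ∂μ := integral_nonneg fun x => sq_nonneg _
    have hreal : (∫ x, v x^2 ∂μ) ^ (2⁻¹:ℝ) ≤ (C₂:ℝ) * (∫ x in Ω, g x^2 ∂μ) ^ (2⁻¹:ℝ) :=
      (ENNReal.ofReal_le_ofReal_iff (by positivity)).mp big
    rw [show (2⁻¹:ℝ) = 1/2 by norm_num, ← Real.sqrt_eq_rpow, ← Real.sqrt_eq_rpow] at hreal
    have hsq : ∫ x, v x^2 ∂μ ≤ (C₂:ℝ)^2 * ∫ x in Ω, g x^2 ∂μ := by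
      have h := pow_le_pow_left₀ (Real.sqrt_nonneg _) hreal 2
      rwa [Real.sq_sqrt hIv0, mul_pow, Real.sq_sqrt hIg0] at h
    -- bound ∫_Ω g² by N * S
    have hg2_int : Integrable (fun x => g x^2) (μ.restrict Ω) := by
      constructor
      · simp_rw [pow_two]
        exact hgmeas.mul hgmeas
      · apply HasFiniteIntegral.restrict_of_bounded (C := ((N:ℝ)*B₀)^2) hΩfin
        filter_upwards [ae_restrict_mem hΩo.measurableSet] with x hx
        rw [Real.norm_eq_abs, abs_of_nonneg (sq_nonneg _)]
        exact pow_le_pow_left₀ (hg0 x) (hgbd x hx) 2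
    have hsum_int : Integrable (fun x => ∑ j, ‖magGrad N A ω j x‖^2) (μ.restrict Ω) :=
      integrable_finset_sum _ fun j _ => hm2_int j
    have hg2leN : ∫ x in Ω, g x^2 ∂μ ≤ (N:ℝ) * S := by
      calc ∫ x in Ω, g x^2 ∂μ
          ≤ ∫ x in Ω, (N:ℝ) * ∑ j, ‖magGrad N A ω j x‖^2 ∂μ := by
            apply integral_mono hg2_int (hsum_int.const_mul _)
            intro x
            show (∑ j, ‖magGrad N A ω j x‖)^2 ≤ (N:ℝ) * ∑ j, ‖magGrad N A ω j x‖^2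
            have h := sq_sum_le_card_mul_sum_sq
              (s := (Finset.univ : Finset (Fin N))) (f := fun j => ‖magGrad N A ω j x‖)
            simpa using h
        _ = (N:ℝ) * S := by
            rw [integral_const_mul, hSdef, integral_finset_sum _ fun j _ => hm2_int j]
    -- compare ∫_Ω ‖ω‖² with ∫ v²
    have hv2cs : HasCompactSupport (fun x => v x^2) :=
      hvc.comp_left (g := fun t : ℝ => t^2) (by simp)
    have hv2_int : Integrable (fun x => v x^2) μ :=
      (hvcont.pow 2).integrable_of_hasCompactSupport hv2cs
    have step : ∫ x in Ω, ‖ω x‖^2 ∂μ ≤ (∫ x, v x^2 ∂μ) + ε * B := by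
      have hrhs_int : Integrable (fun x => v x^2 + ε*(2*‖ω x‖+1)) (μ.restrict Ω) :=
        hv2_int.restrict.add (((hω1_int.const_mul 2).add (integrable_const 1)).const_mul ε)
      calc ∫ x in Ω, ‖ω x‖^2 ∂μ
          ≤ ∫ x in Ω, (v x^2 + ε*(2*‖ω x‖+1)) ∂μ := by
            apply integral_mono hω2_int hrhs_int
            intro x
            show ‖ω x‖^2 ≤ v x^2 + ε*(2*‖ω x‖+1)
            have h1 := hωlev x
            have h2 := hvle x
            have h3 := hv0 x
            have hsq' : ‖ω x‖^2 ≤ (v x + ε)^2 := pow_le_pow_left₀ (norm_nonneg _) h1 2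
            have h4 : ε * v x ≤ ε * ‖ω x‖ := mul_le_mul_of_nonneg_left h2 hε0.le
            have h5 : ε^2 ≤ ε * 1 := by nlinarith
            nlinarith [hsq', h4, h5]
        _ = (∫ x in Ω, v x^2 ∂μ) + ε * (2*I₁ + T) := by
            have ha : Integrable (fun x => v x^2) (μ.restrict Ω) := hv2_int.restrict
            have hb : Integrable (fun x => 2*‖ω x‖ + 1) (μ.restrict Ω) :=
              (hω1_int.const_mul 2).add (integrable_const 1)
            have hc : Integrable (fun x => ε*(2*‖ω x‖ + 1)) (μ.restrict Ω) := hb.const_mul ε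
            have hd : Integrable (fun x => 2*‖ω x‖) (μ.restrict Ω) := hω1_int.const_mul 2
            rw [integral_add ha hc, integral_const_mul, integral_add hd (integrable_const 1),
              integral_const_mul, setIntegral_const, smul_eq_mul, mul_one, measureReal_def]
        _ ≤ (∫ x, v x^2 ∂μ) + ε * B := by
            rw [hB]
            apply add_le_add _ le_rfl
            apply setIntegral_le_integral hv2_int
            filter_upwards with x using sq_nonneg _
    calc ∫ x in Ω, ‖ω x‖^2 ∂μ ≤ (∫ x, v x^2 ∂μ) + ε * B := step
      _ ≤ (C₂:ℝ)^2 * ((N:ℝ) * S) + δ := by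
          apply add_le_add _ hεB
          exact hsq.trans (mul_le_mul_of_nonneg_left hg2leN (by positivity))
      _ = ((C₂:ℝ)^2 * N) * S + δ := by ring
  -- conclude
  have h1 : Real.sqrt (∫ x in Ω, ‖ω x‖^2 ∂μ) ≤ Real.sqrt (((C₂:ℝ) * Real.sqrt N)^2 * S) := by
    apply Real.sqrt_le_sqrt
    calc ∫ x in Ω, ‖ω x‖^2 ∂μ ≤ ((C₂:ℝ)^2 * N) * S := claim
      _ = ((C₂:ℝ) * Real.sqrt N)^2 * S := by
          rw [mul_pow, Real.sq_sqrt (le_of_lt hNpos)]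
  calc Real.sqrt (∫ x in Ω, ‖ω x‖^2 ∂μ) ≤ Real.sqrt (((C₂:ℝ) * Real.sqrt N)^2 * S) := h1
    _ = ((C₂:ℝ) * Real.sqrt N) * Real.sqrt S := by
        rw [Real.sqrt_mul (by positivity), Real.sqrt_sq (by positivity)]
end

section
/- Let Ω ⊂ ℝ intervals or ℝ^N with Ω connected, A ∈ (C¹(Ω))^N with curl A ≡ 0 (i.e. ∂_{x_j}a_k = ∂_{x_k}a_j for all j,k). If ω ∈ C¹(Ω) satisfies i∂_{x_j}ω + a_j ω = 0 for all j = 1,...,N, then |ω| is constant on Ω; in particular if ω vanishes somewhere (e.g. ω ∈ H¹_0) then ω ≡ 0. -/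
/-- The fderiv of `‖ω ·‖ ^ 2` vanishes at each point of `Ω`. -/
theorem magnetic_aux (N : ℕ) (Ω : Set (Fin N → ℝ))
    (A : Fin N → (Fin N → ℝ) → ℝ)
    (ω : (Fin N → ℝ) → ℂ)
    (hω : ∀ x ∈ Ω, DifferentiableAt ℝ ω x)
    (heq : ∀ x ∈ Ω, ∀ j : Fin N,
      Complex.I * fderiv ℝ ω x (Pi.single j 1) + (A j x : ℂ) * ω x = 0) :
    ∀ x ∈ Ω, HasFDerivAt (fun y => ‖ω y‖ ^ 2) (0 : (Fin N → ℝ) →L[ℝ] ℝ) x := by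
  intro x hx
  have hd := (hω x hx).hasFDerivAt
  have h := hd.norm_sq
  have hzero : (2 • (innerSL ℝ (ω x)).comp (fderiv ℝ ω x)) = (0 : (Fin N → ℝ) →L[ℝ] ℝ) := by
    ext v
    have hv : v = ∑ j : Fin N, v j • (Pi.single j 1 : Fin N → ℝ) := by
      ext k
      rw [Finset.sum_apply]
      simp [Pi.single_apply]
    have hDj : ∀ j : Fin N, fderiv ℝ ω x (Pi.single j 1)
        = Complex.I * (A j x : ℂ) * ω x := by
      intro j
      have h0 := heq x hx j
      have : Complex.I * fderiv ℝ ω x (Pi.single j 1) = -((A j x : ℂ) * ω x) := by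
        linear_combination h0
      calc fderiv ℝ ω x (Pi.single j 1)
          = -Complex.I * (Complex.I * fderiv ℝ ω x (Pi.single j 1)) := by
            rw [← mul_assoc, neg_mul, Complex.I_mul_I, neg_neg, one_mul]
        _ = -Complex.I * (-((A j x : ℂ) * ω x)) := by rw [this]
        _ = Complex.I * (A j x : ℂ) * ω x := by ring
    have : fderiv ℝ ω x v = ∑ j : Fin N, v j • (Complex.I * (A j x : ℂ) * ω x) := by
      conv_lhs => rw [hv]
      rw [map_sum]
      simp_rw [map_smul, hDj]
    simp only [ContinuousLinearMap.smul_apply, ContinuousLinearMap.coe_comp',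
      Function.comp_apply, innerSL_apply_apply, ContinuousLinearMap.zero_apply, smul_eq_mul]
    rw [this]
    rw [inner_sum]
    simp only [real_inner_smul_right]
    have hinner : ∀ j : Fin N, (inner ℝ (ω x) (Complex.I * (A j x : ℂ) * ω x) : ℝ) = 0 := by
      intro j
      rw [Complex.inner]
      simp [Complex.mul_re, Complex.mul_im]
      ring
    simp [hinner]
  rw [hzero] at h
  exact h

/-- on a connected open `Ω ⊆ ℝ^N`, if `A ∈ C¹` has vanishing curl and
`ω ∈ C¹(Ω)` satisfies the system `i ∂_j ω + a_j ω = 0` for all `j`, then `|ω|` is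
constant on `Ω`; in particular if `ω` vanishes somewhere on `Ω` then `ω ≡ 0` on `Ω`. -/
theorem magnetic_kernel_curl_zero (N : ℕ) (Ω : Set (Fin N → ℝ))
    (hΩo : IsOpen Ω) (hΩc : IsConnected Ω)
    (A : Fin N → (Fin N → ℝ) → ℝ)
    (hA : ∀ j, ∀ x ∈ Ω, DifferentiableAt ℝ (A j) x)
    (hAc : ∀ j, ContinuousOn (fun x => fderiv ℝ (A j) x) Ω)
    (hcurl : ∀ x ∈ Ω, ∀ j k : Fin N,
      fderiv ℝ (A k) x (Pi.single j 1) = fderiv ℝ (A j) x (Pi.single k 1))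
    (ω : (Fin N → ℝ) → ℂ)
    (hω : ∀ x ∈ Ω, DifferentiableAt ℝ ω x)
    (hωc : ContinuousOn (fun x => fderiv ℝ ω x) Ω)
    (heq : ∀ x ∈ Ω, ∀ j : Fin N,
      Complex.I * fderiv ℝ ω x (Pi.single j 1) + (A j x : ℂ) * ω x = 0) :
    (∀ x ∈ Ω, ∀ y ∈ Ω, ‖ω x‖ = ‖ω y‖) ∧
    ((∃ x ∈ Ω, ω x = 0) → ∀ x ∈ Ω, ω x = 0) := by
  set f : (Fin N → ℝ) → ℝ := fun y => ‖ω y‖ ^ 2 with hf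
  have key := magnetic_aux N Ω A ω hω heq
  -- f is locally constant on Ω
  have hloc : ∀ x ∈ Ω, ∃ r > 0, Metric.ball x r ⊆ Ω ∧
      ∀ y ∈ Metric.ball x r, f y = f x := by
    intro x hx
    obtain ⟨r, hr, hball⟩ := Metric.isOpen_iff.1 hΩo x hx
    refine ⟨r, hr, hball, fun y hy => ?_⟩
    have hconv : Convex ℝ (Metric.ball x r) := convex_ball x r
    have hdiff : DifferentiableOn ℝ f (Metric.ball x r) := fun z hz =>
      ((key z (hball hz)).differentiableAt).differentiableWithinAt
    have hfd : ∀ z ∈ Metric.ball x r, fderivWithin ℝ f (Metric.ball x r) z = 0 := by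
      intro z hz
      exact (key z (hball hz)).hasFDerivWithinAt.fderivWithin
        ((Metric.isOpen_ball.uniqueDiffWithinAt hz))
    exact hconv.is_const_of_fderivWithin_eq_zero hdiff hfd hy (Metric.mem_ball_self hr)
  -- use preconnectedness via locally constant function on the subtype
  have hconst : ∀ x ∈ Ω, ∀ y ∈ Ω, f x = f y := by
    haveI : PreconnectedSpace Ω := Subtype.preconnectedSpace hΩc.isPreconnected
    have hlc : IsLocallyConstant (fun p : Ω => f p.1) := by
      rw [IsLocallyConstant.iff_exists_open]
      rintro ⟨x, hx⟩
      obtain ⟨r, hr, hball, hcst⟩ := hloc x hx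
      refine ⟨Subtype.val ⁻¹' Metric.ball x r,
        Metric.isOpen_ball.preimage continuous_subtype_val,
        Metric.mem_ball_self hr, ?_⟩
      rintro ⟨y, hy⟩ hyb
      exact hcst y hyb
    intro x hx y hy
    exact hlc.apply_eq_of_preconnectedSpace ⟨x, hx⟩ ⟨y, hy⟩
  have hnorm : ∀ x ∈ Ω, ∀ y ∈ Ω, ‖ω x‖ = ‖ω y‖ := by
    intro x hx y hy
    have h := hconst x hx y hy
    have : ‖ω x‖ ^ 2 = ‖ω y‖ ^ 2 := h
    nlinarith [norm_nonneg (ω x), norm_nonneg (ω y)]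
  refine ⟨hnorm, ?_⟩
  rintro ⟨x0, hx0, h0⟩ x hx
  have := hnorm x hx x0 hx0
  rw [h0, norm_zero, norm_eq_zero] at this
  exact this
end

section
/- Let b ∈ C²(0,T] satisfy C₁ ≤ b ≤ C₂ and |b^{(k)}(t)| ≤ C₃(ν(t)/t)^k for k = 1,2. For λ ≥ M, the solution of D_t²û − λ²b²(t)û = 0 written as the first-order system D_t V = B(t,λ)V with V = (λû, D_tû)ᵀ and B = [[0, λ],[λ b², 0]] satisfies, for 0 ≤ t ≤ t_λ (pseudodifferential zone, t λ ≤ 2^P ν(t)): |V(t,λ)| ≲ exp(c₁ ν(t_λ)) (λ|û(0,λ)| + |D_tû(0,λ)|), where t_λ solves tλ = 2^P ν(t) and c₁ depends only on P, M, C₂. -/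
/-- energy estimate in the pseudodifferential zone `Z_pd(P,M)`.
For `λ ≥ M` and `0 ≤ t ≤ t_λ` (where `t_λ λ = 2^P ν(t_λ)`), the micro-energy
`V = (λ û, D_t û)` of a solution of `D_t²û - λ² b²(t) û = 0` satisfies
`|V(t,λ)| ≤ K exp(c₁ ν(t_λ)) (λ|û(0)| + |D_tû(0)|)`, with `c₁, K` depending only on
the fixed constants. -/
theorem pseudodifferential_zone_energy_estimate
    (T C₁ C₂ C₃ C₄ M : ℝ) (P : ℕ) (ν b : ℝ → ℝ)
    (hT : 0 < T) (hC₁ : 0 < C₁) (hC₄ : 0 < C₄) (hM : 0 < M)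
    (hνlb : ∀ t ∈ Set.Ioc (0:ℝ) T, C₄ ≤ ν t)
    (hνanti : StrictAntiOn ν (Set.Ioc (0:ℝ) T))
    (hνcont : ContinuousOn ν (Set.Ioc (0:ℝ) T))
    (hb : ∀ t ∈ Set.Ioc (0:ℝ) T, C₁ ≤ b t ∧ b t ≤ C₂)
    (hb1 : ∀ t ∈ Set.Ioc (0:ℝ) T, |deriv b t| ≤ C₃ * (ν t / t))
    (hb2 : ∀ t ∈ Set.Ioc (0:ℝ) T, |deriv (deriv b) t| ≤ C₃ * (ν t / t) ^ 2) :
    ∃ c₁ > (0:ℝ), ∃ K > (0:ℝ), ∀ lam : ℝ, M ≤ lam →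
      ∀ tl ∈ Set.Ioc (0:ℝ) T, tl * lam = 2 ^ P * ν tl →
      ∀ u du : ℝ → ℂ,
        (∀ τ ∈ Set.Icc (0:ℝ) T, HasDerivAt u (du τ) τ) →
        (∀ τ ∈ Set.Icc (0:ℝ) T,
          HasDerivAt du ((-(lam ^ 2 * (b τ) ^ 2) : ℝ) * u τ) τ) →
        ∀ t ∈ Set.Icc (0:ℝ) tl,
          lam * ‖u t‖ + ‖du t‖ ≤ K * Real.exp (c₁ * ν tl) * (lam * ‖u 0‖ + ‖du 0‖) := by

  classical
  have hC₂ : 0 < C₂ := lt_of_lt_of_le hC₁ ((hb T ⟨hT, le_rfl⟩).1.trans (hb T ⟨hT, le_rfl⟩).2)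
  set c : ℝ := max 1 (C₂ ^ 2) with hc
  have hcpos : (0:ℝ) < c := lt_of_lt_of_le one_pos (le_max_left _ _)
  refine ⟨2 ^ P * c, by positivity, 2, by norm_num, ?_⟩
  intro lam hlam tl htl hrel u du hu hdu t ht
  have hlam0 : 0 < lam := lt_of_lt_of_le hM hlam
  have htlT : tl ≤ T := htl.2
  have htT : t ≤ T := le_trans ht.2 htlT
  -- the vector-valued function
  set f : ℝ → ℂ × ℂ := fun τ => ((lam : ℂ) * u τ, du τ) with hf
  set f' : ℝ → ℂ × ℂ := fun τ =>
    ((lam : ℂ) * du τ, ((-(lam ^ 2 * (b τ) ^ 2) : ℝ) : ℂ) * u τ) with hf'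
  have hder : ∀ τ ∈ Set.Icc (0:ℝ) T, HasDerivAt f (f' τ) τ := by
    intro τ hτ
    exact HasDerivAt.prodMk ((hu τ hτ).const_mul (lam : ℂ)) (by simpa using hdu τ hτ)
  have hfcont : ContinuousOn f (Set.Icc 0 T) := fun τ hτ =>
    (hder τ hτ).continuousAt.continuousWithinAt
  -- component bounds
  have hfst : ∀ τ, lam * ‖u τ‖ ≤ ‖f τ‖ := by
    intro τ
    have := norm_fst_le (f τ)
    simpa [hf, norm_mul, abs_of_pos hlam0] using this
  have hsnd : ∀ τ, ‖du τ‖ ≤ ‖f τ‖ := fun τ => norm_snd_le (f τ)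
  have hbound : ∀ τ ∈ Set.Ioc (0:ℝ) T, ‖f' τ‖ ≤ c * lam * ‖f τ‖ + 0 := by
    intro τ hτ
    rw [add_zero, Prod.norm_def]
    have hbτ := hb τ hτ
    have hb0 : 0 ≤ b τ := le_trans hC₁.le hbτ.1
    refine max_le ?_ ?_
    · have : lam * ‖du τ‖ ≤ lam * ‖f τ‖ :=
        mul_le_mul_of_nonneg_left (hsnd τ) hlam0.le
      calc ‖(lam : ℂ) * du τ‖ = lam * ‖du τ‖ := by
            simp [norm_mul, abs_of_pos hlam0]
        _ ≤ 1 * (lam * ‖f τ‖) := by linarith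
        _ ≤ c * lam * ‖f τ‖ := by
            have := le_max_left 1 (C₂ ^ 2)
            have h0 : 0 ≤ lam * ‖f τ‖ := by positivity
            nlinarith
    · have h1 : ‖((-(lam ^ 2 * (b τ) ^ 2) : ℝ) : ℂ) * u τ‖
          = (b τ) ^ 2 * lam * (lam * ‖u τ‖) := by
        rw [norm_mul, Complex.norm_real, Real.norm_eq_abs, abs_neg, abs_mul,
          abs_of_pos (by positivity : (0:ℝ) < lam ^ 2), abs_of_nonneg (by positivity : (0:ℝ) ≤ (b τ)^2)]
        ring
      rw [h1]
      have h2 : (b τ) ^ 2 ≤ c := le_trans (by nlinarith [hbτ.2] : (b τ)^2 ≤ C₂ ^ 2) (le_max_right _ _)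
      have h3 : lam * ‖u τ‖ ≤ ‖f τ‖ := hfst τ
      calc b τ ^ 2 * lam * (lam * ‖u τ‖) ≤ c * lam * (lam * ‖u τ‖) := by
            have h4 : (0:ℝ) ≤ lam * (lam * ‖u τ‖) := by positivity
            nlinarith
        _ ≤ c * lam * ‖f τ‖ :=
            mul_le_mul_of_nonneg_left h3 (by positivity)
  -- Gronwall from any s ∈ (0, t]
  have key : ∀ s ∈ Set.Ioc (0:ℝ) t, ‖f t‖ ≤ ‖f s‖ * Real.exp (c * lam * (t - s)) := by
    intro s hs
    have hsub : Set.Icc s t ⊆ Set.Icc 0 T := Set.Icc_subset_Icc hs.1.le htT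
    have := norm_le_gronwallBound_of_norm_deriv_right_le (f := f) (f' := f')
      (δ := ‖f s‖) (K := c * lam) (ε := 0) (a := s) (b := t)
      (hfcont.mono hsub)
      (fun τ hτ => (hder τ (hsub ⟨hτ.1, hτ.2.le⟩)).hasDerivWithinAt)
      le_rfl
      (fun τ hτ => hbound τ ⟨lt_of_lt_of_le hs.1 hτ.1, le_trans hτ.2.le htT⟩)
      t ⟨hs.2, le_rfl⟩
    simpa [gronwallBound_ε0] using this
  -- pass to the limit s → 0⁺
  have hft : ‖f t‖ ≤ ‖f 0‖ * Real.exp (c * lam * t) := by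
    rcases eq_or_lt_of_le ht.1 with h0 | h0
    · have : (0:ℝ) ≤ c * lam * t := by
        have : (0:ℝ) ≤ t := ht.1
        positivity
      rw [← h0]
      simp
    · have hne : (Filter.NeBot (nhdsWithin (0:ℝ) (Set.Ioc 0 t))) := by
        rw [← mem_closure_iff_nhdsWithin_neBot, closure_Ioc h0.ne]
        exact ⟨le_rfl, h0.le⟩
      have hcont0 : ContinuousWithinAt f (Set.Ioc 0 t) 0 := by
        refine (hfcont 0 ⟨le_rfl, hT.le⟩).mono ?_
        exact Set.Ioc_subset_Icc_self.trans (Set.Icc_subset_Icc le_rfl htT)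
      have htend : Filter.Tendsto (fun s => ‖f s‖ * Real.exp (c * lam * (t - s)))
          (nhdsWithin (0:ℝ) (Set.Ioc 0 t)) (nhds (‖f 0‖ * Real.exp (c * lam * (t - 0)))) := by
        refine Filter.Tendsto.mul (continuous_norm.continuousAt.tendsto.comp hcont0) ?_
        exact (Real.continuous_exp.tendsto _).comp
          (((continuous_const.mul (continuous_const.sub continuous_id)).tendsto 0).mono_left
            nhdsWithin_le_nhds)
      have hev : ∀ᶠ s in nhdsWithin (0:ℝ) (Set.Ioc 0 t),
          ‖f t‖ ≤ ‖f s‖ * Real.exp (c * lam * (t - s)) :=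
        eventually_mem_nhdsWithin.mono fun s hs => key s hs
      have := ge_of_tendsto htend hev
      simpa using this
  -- conclude
  have hνtl : C₄ ≤ ν tl := hνlb tl htl
  have harg : c * lam * t ≤ 2 ^ P * c * ν tl := by
    have h1 : lam * t ≤ lam * tl := mul_le_mul_of_nonneg_left ht.2 hlam0.le
    have h2 : lam * tl = 2 ^ P * ν tl := by linarith [hrel]
    nlinarith
  have hexp : Real.exp (c * lam * t) ≤ Real.exp (2 ^ P * c * ν tl) := Real.exp_le_exp.2 harg
  have hf0 : ‖f 0‖ ≤ lam * ‖u 0‖ + ‖du 0‖ := by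
    rw [Prod.norm_def]
    refine max_le ?_ ?_
    · simp only [hf, norm_mul, Complex.norm_real, Real.norm_eq_abs, abs_of_pos hlam0]
      linarith [norm_nonneg (du 0)]
    · have : (0:ℝ) ≤ lam * ‖u 0‖ := by positivity
      linarith
  calc lam * ‖u t‖ + ‖du t‖ ≤ 2 * ‖f t‖ := by
        have := hfst t; have := hsnd t; linarith
    _ ≤ 2 * (‖f 0‖ * Real.exp (c * lam * t)) := by linarith [hft]
    _ ≤ 2 * Real.exp (2 ^ P * c * ν tl) * (lam * ‖u 0‖ + ‖du 0‖) := by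
        have e1 : (0:ℝ) < Real.exp (c * lam * t) := Real.exp_pos _
        have e2 : (0:ℝ) < Real.exp (2 ^ P * c * ν tl) := Real.exp_pos _
        nlinarith [norm_nonneg (f 0), hf0, hexp]
end
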